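/- Let y1, y2 > 0, y2 > 1, h = sqrt(y1+y2-y1y2) > 0. Then lim_{r↓1} (1/(2πi)) ∮_{|ξ|=1} [y2(1+hrξ)(1+h/(rξ))/((y2+hrξ)(y2+h/(rξ)))] · (1-y2) r h /(y2 r ξ + h)^2 dξ = -y1 y2 h^2/(y1+y2)^3. -/

import Mathlib

open Filter


set_option maxHeartbeats 1000000 in
private lemma pf_identity (y2 h r ξ : ℂ) (hξ : ξ ≠ 0) (hr : r ≠ 0) (hy2 : y2 ≠ 0)
    (hh : h ≠ 0) (hE : y2 ^ 2 - h ^ 2 ≠ 0)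
    (hd1 : y2 + h * r * ξ ≠ 0) (hd2 : y2 * r * ξ + h ≠ 0) (hd3 : y2 + h / (r * ξ) ≠ 0) :
    (y2 * (1 + h * r * ξ) * (1 + h / (r * ξ)) / ((y2 + h * r * ξ) * (y2 + h / (r * ξ)))) *
      ((1 - y2) * r * h / (y2 * r * ξ + h) ^ 2) =
    (-((y2 - 1) ^ 2 * h ^ 2 * y2 * (y2 - h ^ 2)) / (y2 ^ 2 - h ^ 2) ^ 3) * (ξ + h / (y2 * r))⁻¹ +
      ((-((y2 - 1) * h * (y2 ^ 3 + (y2 - 3) * y2 ^ 2 * h ^ 2 + h ^ 4)) /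
          (y2 ^ 2 * r * (y2 ^ 2 - h ^ 2) ^ 2)) * ((ξ + h / (y2 * r)) ^ 2)⁻¹ +
        ((-((y2 - 1) ^ 2 * h ^ 2 * (y2 - h ^ 2)) / (y2 ^ 3 * r ^ 2 * (y2 ^ 2 - h ^ 2))) *
            ((ξ + h / (y2 * r)) ^ 3)⁻¹ +
          (((y2 - 1) ^ 2 * h ^ 2 * y2 * (y2 - h ^ 2)) / (y2 ^ 2 - h ^ 2) ^ 3) *
            (ξ + y2 / (h * r))⁻¹)) := by
  have hyr : y2 * r ≠ 0 := mul_ne_zero hy2 hr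
  have hhr : h * r ≠ 0 := mul_ne_zero hh hr
  have hrξ : r * ξ ≠ 0 := mul_ne_zero hr hξ
  have hβ' : h * r * ξ + y2 ≠ 0 := by intro h0; apply hd1; linear_combination h0
  have hα3 : (y2 * r * ξ + h) ^ 3 ≠ 0 := pow_ne_zero 3 hd2
  have hQ : (y2 ^ 2 - h ^ 2) ^ 3 * (y2 * r * ξ + h) ^ 3 * (h * r * ξ + y2) ≠ 0 :=
    mul_ne_zero (mul_ne_zero (pow_ne_zero 3 hE) hα3) hβ'
  have e3 : ξ + h / (y2 * r) = (y2 * r * ξ + h) / (y2 * r) := by field_simp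
  have e4 : ξ + y2 / (h * r) = (h * r * ξ + y2) / (h * r) := by field_simp
  have eL : (y2 * (1 + h * r * ξ) * (1 + h / (r * ξ)) /
        ((y2 + h * r * ξ) * (y2 + h / (r * ξ)))) *
      ((1 - y2) * r * h / (y2 * r * ξ + h) ^ 2) =
      (1 - y2) * y2 * r * h * ((1 + h * r * ξ) * (r * ξ + h)) /
        ((y2 + h * r * ξ) * (y2 * r * ξ + h) ^ 3) := by
    rw [div_mul_div_comm, div_eq_div_iff
      (mul_ne_zero (mul_ne_zero hd1 hd3) (pow_ne_zero 2 hd2))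
      (mul_ne_zero hd1 hα3)]
    field_simp
  have r1 : (-((y2 - 1) ^ 2 * h ^ 2 * y2 * (y2 - h ^ 2)) / (y2 ^ 2 - h ^ 2) ^ 3) *
        (ξ + h / (y2 * r))⁻¹ =
      -((y2 - 1) ^ 2 * h ^ 2 * y2 * (y2 - h ^ 2)) * y2 * r * ((y2 * r * ξ + h) ^ 2 *
          (h * r * ξ + y2)) /
        ((y2 ^ 2 - h ^ 2) ^ 3 * (y2 * r * ξ + h) ^ 3 * (h * r * ξ + y2)) := by
    rw [e3, inv_div, div_mul_div_comm, div_eq_div_iff (mul_ne_zero (pow_ne_zero 3 hE) hd2) hQ]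
    ring
  have r2 : (-((y2 - 1) * h * (y2 ^ 3 + (y2 - 3) * y2 ^ 2 * h ^ 2 + h ^ 4)) /
          (y2 ^ 2 * r * (y2 ^ 2 - h ^ 2) ^ 2)) * ((ξ + h / (y2 * r)) ^ 2)⁻¹ =
      -((y2 - 1) * h * (y2 ^ 3 + (y2 - 3) * y2 ^ 2 * h ^ 2 + h ^ 4)) * r *
          ((y2 ^ 2 - h ^ 2) * (y2 * r * ξ + h) * (h * r * ξ + y2)) /
        ((y2 ^ 2 - h ^ 2) ^ 3 * (y2 * r * ξ + h) ^ 3 * (h * r * ξ + y2)) := by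
    rw [e3, div_pow, inv_div, div_mul_div_comm, div_eq_div_iff
      (mul_ne_zero (mul_ne_zero (mul_ne_zero (pow_ne_zero 2 hy2) hr) (pow_ne_zero 2 hE))
        (pow_ne_zero 2 hd2)) hQ]
    ring
  have r3 : (-((y2 - 1) ^ 2 * h ^ 2 * (y2 - h ^ 2)) / (y2 ^ 3 * r ^ 2 * (y2 ^ 2 - h ^ 2))) *
        ((ξ + h / (y2 * r)) ^ 3)⁻¹ =
      -((y2 - 1) ^ 2 * h ^ 2 * (y2 - h ^ 2)) * r * ((y2 ^ 2 - h ^ 2) ^ 2 * (h * r * ξ + y2)) /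
        ((y2 ^ 2 - h ^ 2) ^ 3 * (y2 * r * ξ + h) ^ 3 * (h * r * ξ + y2)) := by
    rw [e3, div_pow, inv_div, div_mul_div_comm, div_eq_div_iff
      (mul_ne_zero (mul_ne_zero (mul_ne_zero (pow_ne_zero 3 hy2) (pow_ne_zero 2 hr)) hE)
        hα3) hQ]
    ring
  have r4 : (((y2 - 1) ^ 2 * h ^ 2 * y2 * (y2 - h ^ 2)) / (y2 ^ 2 - h ^ 2) ^ 3) *
        (ξ + y2 / (h * r))⁻¹ =
      ((y2 - 1) ^ 2 * h ^ 2 * y2 * (y2 - h ^ 2)) * h * r * (y2 * r * ξ + h) ^ 3 /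
        ((y2 ^ 2 - h ^ 2) ^ 3 * (y2 * r * ξ + h) ^ 3 * (h * r * ξ + y2)) := by
    rw [e4, inv_div, div_mul_div_comm, div_eq_div_iff (mul_ne_zero (pow_ne_zero 3 hE) hβ') hQ]
    ring
  rw [eL, r1, r2, r3, r4, ← add_div, ← add_div, ← add_div,
    div_eq_div_iff (mul_ne_zero hd1 hα3) hQ]
  ring

open Filter Metric Set Complex Real in
private lemma circleIntegral_add' {f g : ℂ → ℂ} {c : ℂ} {R : ℝ}
    (hf : CircleIntegrable f c R) (hg : CircleIntegrable g c R) :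
    (∮ z in C(c, R), (f z + g z)) = (∮ z in C(c, R), f z) + ∮ z in C(c, R), g z := by
  simp only [circleIntegral, smul_add, intervalIntegral.integral_add hf.out hg.out]

open Metric in
private lemma circle_integral_pf (a b c d w0 w1 : ℂ)
    (habs0 : ‖w0‖ < 1) (habs1 : 1 < ‖w1‖) :
    (∮ z in C((0:ℂ), 1),
        (a * (z - w0)⁻¹ + (b * ((z - w0) ^ 2)⁻¹ + (c * ((z - w0) ^ 3)⁻¹ + d * (z - w1)⁻¹)))) =
      a * (2 * Real.pi * Complex.I) := by
  have hw0s : ∀ z ∈ Metric.sphere (0:ℂ) 1, z - w0 ≠ 0 := by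
    intro z hz h0
    have hz1 : ‖z‖ = 1 := by simpa using hz
    rw [sub_eq_zero] at h0; rw [h0] at hz1; exact habs0.ne hz1
  have hw1s : ∀ z ∈ Metric.sphere (0:ℂ) 1, z - w1 ≠ 0 := by
    intro z hz h0
    have hz1 : ‖z‖ = 1 := by simpa using hz
    rw [sub_eq_zero] at h0; rw [h0] at hz1; exact habs1.ne' hz1
  have hcont : ∀ w : ℂ, ContinuousOn (fun z : ℂ => z - w) (Metric.sphere (0:ℂ) 1) :=
    fun w => (continuous_id.sub continuous_const).continuousOn
  have hci1 : CircleIntegrable (fun z : ℂ => a * (z - w0)⁻¹) 0 1 :=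
    ContinuousOn.circleIntegrable zero_le_one
      (continuousOn_const.mul (((hcont w0).inv₀ hw0s)))
  have hci2 : CircleIntegrable (fun z : ℂ => b * ((z - w0) ^ 2)⁻¹) 0 1 :=
    ContinuousOn.circleIntegrable zero_le_one
      (continuousOn_const.mul ((((hcont w0).pow 2).inv₀
        (fun z hz => pow_ne_zero 2 (hw0s z hz)))))
  have hci3 : CircleIntegrable (fun z : ℂ => c * ((z - w0) ^ 3)⁻¹) 0 1 :=
    ContinuousOn.circleIntegrable zero_le_one
      (continuousOn_const.mul ((((hcont w0).pow 3).inv₀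
        (fun z hz => pow_ne_zero 3 (hw0s z hz)))))
  have hci4 : CircleIntegrable (fun z : ℂ => d * (z - w1)⁻¹) 0 1 :=
    ContinuousOn.circleIntegrable zero_le_one
      (continuousOn_const.mul (((hcont w1).inv₀ hw1s)))
  have hci34 : CircleIntegrable
      (fun z : ℂ => c * ((z - w0) ^ 3)⁻¹ + d * (z - w1)⁻¹) 0 1 := hci3.add hci4
  have hci234 : CircleIntegrable
      (fun z : ℂ => b * ((z - w0) ^ 2)⁻¹ + (c * ((z - w0) ^ 3)⁻¹ + d * (z - w1)⁻¹)) 0 1 :=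
    hci2.add hci34
  rw [circleIntegral_add' hci1 hci234, circleIntegral_add' hci2 hci34,
      circleIntegral_add' hci3 hci4]
  have hv1 : (∮ z in C((0:ℂ), 1), a * (z - w0)⁻¹) = a * (2 * Real.pi * Complex.I) := by
    rw [circleIntegral.integral_const_mul,
      circleIntegral.integral_sub_inv_of_mem_ball (by simpa [Complex.dist_eq] using habs0)]
  have hv2 : (∮ z in C((0:ℂ), 1), b * ((z - w0) ^ 2)⁻¹) = 0 := by
    rw [circleIntegral.integral_const_mul]
    have h2 : (∮ z in C((0:ℂ), 1), ((z - w0) ^ 2)⁻¹)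
        = ∮ z in C((0:ℂ), 1), (z - w0) ^ (-2 : ℤ) := by
      apply circleIntegral.integral_congr zero_le_one
      intro z _; norm_num [zpow_neg, zpow_ofNat]
    rw [h2, circleIntegral.integral_sub_zpow_of_ne (by decide), mul_zero]
  have hv3 : (∮ z in C((0:ℂ), 1), c * ((z - w0) ^ 3)⁻¹) = 0 := by
    rw [circleIntegral.integral_const_mul]
    have h3 : (∮ z in C((0:ℂ), 1), ((z - w0) ^ 3)⁻¹)
        = ∮ z in C((0:ℂ), 1), (z - w0) ^ (-3 : ℤ) := by
      apply circleIntegral.integral_congr zero_le_one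
      intro z _; norm_num [zpow_neg, zpow_ofNat]
    rw [h3, circleIntegral.integral_sub_zpow_of_ne (by decide), mul_zero]
  have hv4 : (∮ z in C((0:ℂ), 1), d * (z - w1)⁻¹) = 0 := by
    rw [circleIntegral.integral_const_mul]
    have hcb : ∀ z ∈ Metric.closedBall (0:ℂ) 1, z - w1 ≠ 0 := by
      intro z hz h0
      rw [sub_eq_zero] at h0
      have : ‖z‖ ≤ 1 := by simpa [Complex.dist_eq] using hz
      rw [h0] at this; linarith
    have hc : ContinuousOn (fun z : ℂ => (z - w1)⁻¹) (Metric.closedBall (0:ℂ) 1) :=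
      ((continuous_id.sub continuous_const).continuousOn).inv₀ hcb
    have hdiff : ∀ z ∈ Metric.ball (0:ℂ) 1 \ (∅ : Set ℂ),
        DifferentiableAt ℂ (fun z : ℂ => (z - w1)⁻¹) z := fun z hz =>
      (differentiableAt_id.sub_const w1).inv
        (hcb z (Metric.ball_subset_closedBall hz.1))
    rw [Complex.circleIntegral_eq_zero_of_differentiable_on_off_countable zero_le_one
      Set.countable_empty hc hdiff, mul_zero]
  rw [hv1, hv2, hv3, hv4]
  ring

set_option maxHeartbeats 1000000 in
theorem stmt15 (y1 y2 h : ℝ) (hy1 : 0 < y1) (hy2 : 1 < y2)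
    (hpos : 0 < y1 + y2 - y1 * y2) (hh : h = Real.sqrt (y1 + y2 - y1 * y2)) :
    Tendsto (fun r : ℝ =>
      (1 / (2 * (Real.pi : ℂ) * Complex.I)) *
        ∮ ξ in C((0 : ℂ), 1),
          ((y2 : ℂ) * (1 + (h : ℂ) * (r : ℂ) * ξ) * (1 + (h : ℂ) / ((r : ℂ) * ξ)) /
            (((y2 : ℂ) + (h : ℂ) * (r : ℂ) * ξ) * ((y2 : ℂ) + (h : ℂ) / ((r : ℂ) * ξ)))) *
          (((1 - y2 : ℝ) : ℂ) * (r : ℂ) * (h : ℂ) / ((y2 : ℂ) * (r : ℂ) * ξ + (h : ℂ)) ^ 2))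
      (nhdsWithin 1 (Set.Ioi 1))
      (nhds ((-(y1 * y2 * h ^ 2) / (y1 + y2) ^ 3 : ℝ) : ℂ)) := by
  have hy2pos : (0:ℝ) < y2 := lt_trans one_pos hy2
  have hhpos : 0 < h := by rw [hh]; exact Real.sqrt_pos.mpr hpos
  have hh2 : h ^ 2 = y1 + y2 - y1 * y2 := by
    rw [hh]; exact Real.sq_sqrt hpos.le
  have hhy2 : h < y2 := by nlinarith
  have hsqC : (h:ℂ) ^ 2 = (y1:ℂ) + (y2:ℂ) - (y1:ℂ) * (y2:ℂ) := by
    rw [← Complex.ofReal_pow, hh2]; push_cast; ring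
  have hy2C : (y2:ℂ) ≠ 0 := by exact_mod_cast hy2pos.ne'
  have hhC : (h:ℂ) ≠ 0 := by exact_mod_cast hhpos.ne'
  have hy2m1C : (y2:ℂ) - 1 ≠ 0 := by
    intro h0
    have h1 : (y2:ℂ) = 1 := by linear_combination h0
    have h2 : y2 = 1 := by exact_mod_cast h1
    linarith
  have hsumC : (y1:ℂ) + (y2:ℂ) ≠ 0 := by
    have hp : (0:ℝ) < y1 + y2 := by linarith
    intro h0
    have : ((y1 + y2 : ℝ) : ℂ) = 0 := by push_cast; linear_combination h0
    exact hp.ne' (by exact_mod_cast this)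
  have hEC : (y2:ℂ)^2 - (h:ℂ)^2 ≠ 0 := by
    have hp : (0:ℝ) < y2^2 - h^2 := by nlinarith
    intro h0
    have : ((y2^2 - h^2 : ℝ) : ℂ) = 0 := by push_cast; linear_combination h0
    exact hp.ne' (by exact_mod_cast this)
  have hev : ∀ᶠ (r : ℝ) in nhdsWithin (1:ℝ) (Set.Ioi (1:ℝ)),
      (1 / (2 * (Real.pi : ℂ) * Complex.I)) *
        (∮ ξ in C((0 : ℂ), 1),
          ((y2 : ℂ) * (1 + (h : ℂ) * (r : ℂ) * ξ) * (1 + (h : ℂ) / ((r : ℂ) * ξ)) /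
            (((y2 : ℂ) + (h : ℂ) * (r : ℂ) * ξ) * ((y2 : ℂ) + (h : ℂ) / ((r : ℂ) * ξ)))) *
          (((1 - y2 : ℝ) : ℂ) * (r : ℂ) * (h : ℂ) / ((y2 : ℂ) * (r : ℂ) * ξ + (h : ℂ)) ^ 2))
        = ((-(y1 * y2 * h ^ 2) / (y1 + y2) ^ 3 : ℝ) : ℂ) := by
    have h1lt : (1:ℝ) < y2 / h := (one_lt_div hhpos).mpr hhy2
    filter_upwards [Ioo_mem_nhdsGT_of_mem (Set.mem_Ico.mpr ⟨le_refl 1, h1lt⟩)] with r hr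
    obtain ⟨hr1, hr2⟩ := hr
    have hrpos : (0:ℝ) < r := lt_trans one_pos hr1
    have hrC : (r:ℂ) ≠ 0 := by exact_mod_cast hrpos.ne'
    have hhr : h * r < y2 := by
      have := (lt_div_iff₀ hhpos).mp hr2; nlinarith
    have hhy2r : h < y2 * r := by nlinarith
    set w0 : ℂ := ((-(h / (y2 * r)) : ℝ) : ℂ) with hw0
    set w1 : ℂ := ((-(y2 / (h * r)) : ℝ) : ℂ) with hw1
    have habs0 : ‖w0‖ < 1 := by
      rw [hw0, Complex.norm_real, Real.norm_eq_abs, abs_neg, abs_of_pos (by positivity)]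
      rw [div_lt_one (by positivity)]; exact hhy2r
    have habs1 : 1 < ‖w1‖ := by
      rw [hw1, Complex.norm_real, Real.norm_eq_abs, abs_neg, abs_of_pos (by positivity)]
      rw [lt_div_iff₀ (by positivity)]; nlinarith
    have hEq : Set.EqOn
        (fun ξ : ℂ =>
          ((y2 : ℂ) * (1 + (h : ℂ) * (r : ℂ) * ξ) * (1 + (h : ℂ) / ((r : ℂ) * ξ)) /
            (((y2 : ℂ) + (h : ℂ) * (r : ℂ) * ξ) * ((y2 : ℂ) + (h : ℂ) / ((r : ℂ) * ξ)))) *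
          (((1 - y2 : ℝ) : ℂ) * (r : ℂ) * (h : ℂ) / ((y2 : ℂ) * (r : ℂ) * ξ + (h : ℂ)) ^ 2))
        (fun ξ : ℂ =>
          (-(((y2:ℂ) - 1) ^ 2 * (h:ℂ) ^ 2 * (y2:ℂ) * ((y2:ℂ) - (h:ℂ) ^ 2)) /
              ((y2:ℂ) ^ 2 - (h:ℂ) ^ 2) ^ 3) * (ξ - w0)⁻¹ +
            ((-(((y2:ℂ) - 1) * (h:ℂ) *
                ((y2:ℂ) ^ 3 + ((y2:ℂ) - 3) * (y2:ℂ) ^ 2 * (h:ℂ) ^ 2 + (h:ℂ) ^ 4)) /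
                ((y2:ℂ) ^ 2 * (r:ℂ) * ((y2:ℂ) ^ 2 - (h:ℂ) ^ 2) ^ 2)) * ((ξ - w0) ^ 2)⁻¹ +
              ((-(((y2:ℂ) - 1) ^ 2 * (h:ℂ) ^ 2 * ((y2:ℂ) - (h:ℂ) ^ 2)) /
                  ((y2:ℂ) ^ 3 * (r:ℂ) ^ 2 * ((y2:ℂ) ^ 2 - (h:ℂ) ^ 2))) * ((ξ - w0) ^ 3)⁻¹ +
                ((((y2:ℂ) - 1) ^ 2 * (h:ℂ) ^ 2 * (y2:ℂ) * ((y2:ℂ) - (h:ℂ) ^ 2)) /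
                    ((y2:ℂ) ^ 2 - (h:ℂ) ^ 2) ^ 3) * (ξ - w1)⁻¹)))
        (Metric.sphere (0:ℂ) 1) := by
      intro ξ hξ
      have habsξ : ‖ξ‖ = 1 := by simpa using hξ
      have hξ0 : ξ ≠ 0 := by
        intro h0; rw [h0] at habsξ; simp at habsξ
      have hden1 : (y2:ℂ) + (h:ℂ) * r * ξ ≠ 0 := by
        intro h0
        have h1 : (h:ℂ) * r * ξ = -(y2:ℂ) := by linear_combination h0
        have h2 := congrArg (fun z : ℂ => ‖z‖) h1
        simp [norm_mul, habsξ, Complex.norm_real, Real.norm_eq_abs, abs_of_pos hhpos, abs_of_pos hrpos,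
          abs_of_pos hy2pos] at h2
        nlinarith
      have hden2 : (y2:ℂ) * r * ξ + (h:ℂ) ≠ 0 := by
        intro h0
        have h1 : (y2:ℂ) * r * ξ = -(h:ℂ) := by linear_combination h0
        have h2 := congrArg (fun z : ℂ => ‖z‖) h1
        simp [norm_mul, habsξ, Complex.norm_real, Real.norm_eq_abs, abs_of_pos hhpos, abs_of_pos hrpos,
          abs_of_pos hy2pos] at h2
        nlinarith
      have hden3 : (y2:ℂ) + (h:ℂ) / ((r:ℂ) * ξ) ≠ 0 := by
        intro h0
        apply hden2
        have hne : (r:ℂ) * ξ ≠ 0 := mul_ne_zero hrC hξ0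
        field_simp at h0
        linear_combination h0
      have ew0 : ∀ ζ : ℂ, ζ - w0 = ζ + (h:ℂ) / ((y2:ℂ) * (r:ℂ)) := by
        intro ζ; rw [hw0]; push_cast; ring
      have ew1 : ∀ ζ : ℂ, ζ - w1 = ζ + (y2:ℂ) / ((h:ℂ) * (r:ℂ)) := by
        intro ζ; rw [hw1]; push_cast; ring
      simp only [ew0, ew1]
      push_cast
      exact pf_identity (y2:ℂ) (h:ℂ) (r:ℂ) ξ hξ0 hrC hy2C hhC hEC hden1 hden2 hden3
    rw [circleIntegral.integral_congr zero_le_one hEq, circle_integral_pf _ _ _ _ _ _ habs0 habs1]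
    have hπ : (2 * (Real.pi : ℂ) * Complex.I) ≠ 0 := by
      simp [Real.pi_ne_zero, Complex.I_ne_zero]
    rw [one_div, inv_mul_eq_div, mul_div_assoc, div_self hπ, mul_one]
    push_cast
    rw [div_eq_div_iff (pow_ne_zero 3 hEC) (pow_ne_zero 3 hsumC), hsqC]
    ring
  exact Filter.Tendsto.congr' (by filter_upwards [hev] with r hr using hr.symm)
    tendsto_const_nhds
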